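/- For every complex symmetric n×n matrix M there exists a unitary matrix U such that Uᵀ M U is diagonal with real nonnegative entries (Takagi/Schur decomposition). -/

import Mathlib

open Matrix


lemma ob_dot {m : ℕ} (b : OrthonormalBasis (Fin m) ℂ (EuclideanSpace ℂ (Fin m))) (i j : Fin m) :
    star (⇑(b i)) ⬝ᵥ ⇑(b j) = if i = j then 1 else 0 := by
  have h := b.orthonormal
  rw [orthonormal_iff_ite] at h
  have h2 := h i j
  rw [PiLp.inner_apply] at h2
  simpa [dotProduct, Pi.star_apply, RCLike.inner_apply, mul_comm] using h2

lemma ob_dot' {m : ℕ} (b : OrthonormalBasis (Fin m) ℂ (EuclideanSpace ℂ (Fin m))) (i j : Fin m) :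
    ∑ k, star (b i k) * b j k = if i = j then 1 else 0 := ob_dot b i j

lemma star_smul_real (c : ℝ) (x : Fin m → ℂ) : star ((c:ℂ) • x) = (c:ℂ) • star x := by
  ext i; simp

lemma takagi_vec (n : ℕ) (M : Matrix (Fin (n+1)) (Fin (n+1)) ℂ) (hM : M = Mᵀ) :
    ∃ (σ : ℝ) (v : Fin (n+1) → ℂ), 0 ≤ σ ∧ star v ⬝ᵥ v = 1 ∧ M *ᵥ star v = (σ:ℂ) • v := by
  have hH : (M * Mᴴ).IsHermitian := isHermitian_mul_conjTranspose_self M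
  have hlm : 0 ≤ hH.eigenvalues 0 := eigenvalues_self_mul_conjTranspose_nonneg M 0
  set lam := hH.eigenvalues 0 with hlam
  set w : Fin (n+1) → ℂ := ⇑(hH.eigenvectorBasis 0) with hw
  have hHw : (M * Mᴴ) *ᵥ w = (lam:ℂ) • w := by
    rw [hw, hH.mulVec_eigenvectorBasis 0]
    ext i
    simp [← hlam, Complex.real_smul]
  -- conj transpose = map star
  have hsym : ∀ i j, M i j = M j i := fun i j => by
    conv_lhs => rw [hM, transpose_apply]
  have hMc : Mᴴ = M.map star := by
    ext i j
    rw [conjTranspose_apply, Matrix.map_apply, hsym]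
  set u : Fin (n+1) → ℂ := M *ᵥ star w with hu
  have hsu : star u = Mᴴ *ᵥ w := by
    rw [hMc, hu]
    ext i
    simp [Matrix.mulVec, dotProduct, Matrix.map_apply, Pi.star_apply, star_sum]
  have hMu : M *ᵥ star u = (lam:ℂ) • w := by
    rw [hsu, Matrix.mulVec_mulVec, hHw]
  set σ := Real.sqrt lam with hσ
  have hσ0 : 0 ≤ σ := Real.sqrt_nonneg _
  have hσ2 : (σ:ℂ) * (σ:ℂ) = (lam:ℂ) := by
    rw [← Complex.ofReal_mul, Real.mul_self_sqrt hlm]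
  set v₀ : Fin (n+1) → ℂ := u + (σ:ℂ) • w with hv₀
  have hMv₀ : M *ᵥ star v₀ = (σ:ℂ) • v₀ := by
    have : star v₀ = star u + (σ:ℂ) • star w := by
      rw [hv₀]; ext i; simp [Pi.star_apply]
    rw [this, Matrix.mulVec_add, Matrix.mulVec_smul, hMu, ← hu, hv₀]
    rw [smul_add, smul_smul, hσ2]
    abel
  have hwu : star w ⬝ᵥ w = 1 := by
    have := ob_dot hH.eigenvectorBasis 0 0
    simpa [hw] using this
  by_cases hz : v₀ = 0
  · -- u = -(σ:ℂ) • w ; take v = I • w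
    have hu' : u = -((σ:ℂ) • w) := by
      have h0 : u + (σ:ℂ) • w = 0 := by rw [← hv₀]; exact hz
      linear_combination (norm := module) h0
    refine ⟨σ, Complex.I • w, hσ0, ?_, ?_⟩
    · have hstar : star (Complex.I • w) = (-Complex.I) • star w := by
        ext i; simp [Pi.star_apply]
      rw [hstar]
      rw [smul_dotProduct, dotProduct_smul, hwu]
      simp [Complex.ext_iff]
    · have hstar : star (Complex.I • w) = (-Complex.I) • star w := by
        ext i; simp [Pi.star_apply]
      rw [hstar, Matrix.mulVec_smul, ← hu, hu']
      ext i
      simp [Pi.smul_apply]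
      ring
  · -- normalize v₀
    set s : ℝ := ∑ i, Complex.normSq (v₀ i) with hs
    have hdot : star v₀ ⬝ᵥ v₀ = (s:ℂ) := by
      rw [hs]
      push_cast
      refine Finset.sum_congr rfl fun i _ => ?_
      simp [Pi.star_apply, Complex.star_def, Complex.normSq_eq_conj_mul_self]
    have hspos : 0 < s := by
      obtain ⟨i, hi⟩ := Function.ne_iff.mp hz
      apply Finset.sum_pos' (fun i _ => Complex.normSq_nonneg _)
      exact ⟨i, Finset.mem_univ i, by simpa using Complex.normSq_pos.mpr hi⟩
    set t : ℝ := (Real.sqrt s)⁻¹ with ht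
    have hts : (t:ℂ) * (t:ℂ) * (s:ℂ) = 1 := by
      rw [ht, ← Complex.ofReal_mul, ← Complex.ofReal_mul, ← mul_inv,
        Real.mul_self_sqrt hspos.le]
      norm_num [hspos.ne']
    refine ⟨σ, (t:ℂ) • v₀, hσ0, ?_, ?_⟩
    · rw [star_smul_real, smul_dotProduct, dotProduct_smul, hdot]
      rw [smul_eq_mul, smul_eq_mul, ← mul_assoc, hts]
    · rw [star_smul_real, Matrix.mulVec_smul, hMv₀, smul_comm]

theorem takagi_decomposition (n : ℕ) (M : Matrix (Fin n) (Fin n) ℂ) (hM : M = Mᵀ) :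
    ∃ U : Matrix (Fin n) (Fin n) ℂ, U ∈ Matrix.unitaryGroup (Fin n) ℂ ∧
      ∃ d : Fin n → ℝ, (∀ j, 0 ≤ d j) ∧
        Uᵀ * M * U = Matrix.diagonal (fun j => (d j : ℂ)) := by
  induction n with
  | zero =>
    refine ⟨1, by simp [Matrix.mem_unitaryGroup_iff], fun _ => 0, fun j => le_refl 0, ?_⟩
    ext i j
    exact i.elim0
  | succ n ih =>
    obtain ⟨σ, v, hσ0, hvunit, hMv⟩ := takagi_vec n M hM
    -- v as a Euclidean vector of norm 1
    set vE : EuclideanSpace ℂ (Fin (n+1)) := (WithLp.equiv 2 _).symm v with hvE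
    have hinner : (inner ℂ vE vE : ℂ) = 1 := by
      rw [PiLp.inner_apply]
      rw [← hvunit]
      simp [dotProduct, hvE, RCLike.inner_apply, Pi.star_apply, Complex.star_def, Complex.conj_mul']
    -- orthonormal singleton family
    have horth : Orthonormal ℂ (Set.restrict {(0 : Fin (n+1))} (fun _ => vE)) := by
      rw [orthonormal_iff_ite]
      intro i j
      have hij : i = j := Subsingleton.elim i j
      have hn : ‖vE‖ = 1 := by
        rw [inner_self_eq_norm_sq_to_K] at hinner
        have h3 : ((‖vE‖ ^ 2 : ℝ) : ℂ) = 1 := by push_cast; exact hinner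
        have h' : ‖vE‖ ^ 2 = 1 := by exact_mod_cast h3
        nlinarith [norm_nonneg vE]
      simp [hij, hinner, hn]
      exact Or.inl hn
    obtain ⟨b, hb⟩ := horth.exists_orthonormalBasis_extension_of_card_eq
      (by simp) 
    have hb0 : b 0 = vE := hb 0 (by simp)
    have hbv : ∀ i, b 0 i = v i := fun i => by rw [hb0]; rfl
    -- the unitary V with columns star (b j)
    set V : Matrix (Fin (n+1)) (Fin (n+1)) ℂ := Matrix.of (fun i j => star (b j i)) with hV
    have hVmem : V ∈ Matrix.unitaryGroup (Fin (n+1)) ℂ := by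
      rw [Matrix.mem_unitaryGroup_iff']
      ext j k
      rw [Matrix.mul_apply]
      simp only [Matrix.star_apply, hV, Matrix.of_apply, Matrix.one_apply]
      have hsum : ∑ x, star (star (b j x)) * star (b k x) = ∑ x, star (b k x) * b j x := by
        refine Finset.sum_congr rfl fun x _ => ?_
        rw [star_star, mul_comm]
      rw [hsum, ob_dot' b k j]
      simp only [eq_comm]
    set N : Matrix (Fin (n+1)) (Fin (n+1)) ℂ := Vᵀ * M * V with hN
    have hNsymm : N = Nᵀ := by
      rw [hN, Matrix.transpose_mul, Matrix.transpose_mul, Matrix.transpose_transpose, ← hM,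
        Matrix.mul_assoc]
    have hN0 : ∀ j, N j 0 = if j = 0 then (σ:ℂ) else 0 := by
      intro j
      have hcol : ∀ i, V i 0 = star v i := by
        intro i
        rw [hV]
        show star (b 0 i) = star v i
        rw [hbv i]
        rfl
      have h1 : N j 0 = ∑ i, V i j * (M *ᵥ star v) i := by
        rw [hN, Matrix.mul_assoc, Matrix.mul_apply]
        refine Finset.sum_congr rfl fun i _ => ?_
        rw [Matrix.transpose_apply]
        congr 1
        rw [Matrix.mul_apply, Matrix.mulVec]
        refine Finset.sum_congr rfl fun i' _ => ?_
        rw [hcol]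
      have h3 : ∑ i, star (b j i) * v i = if j = 0 then 1 else 0 := by
        rw [← ob_dot' b j 0]
        exact Finset.sum_congr rfl fun i _ => by rw [hbv i]
      rw [h1, hMv]
      calc ∑ i, V i j * ((σ:ℂ) • v) i = (σ:ℂ) * ∑ i, star (b j i) * v i := by
            rw [Finset.mul_sum]
            refine Finset.sum_congr rfl fun i _ => ?_
            simp only [hV, Matrix.of_apply, Pi.smul_apply, smul_eq_mul]
            ring
        _ = if j = 0 then (σ:ℂ) else 0 := by
            rw [h3]
            split <;> simp
    have hN0' : ∀ k, N 0 k = if k = 0 then (σ:ℂ) else 0 := by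
      intro k
      conv_lhs => rw [hNsymm, Matrix.transpose_apply]
      exact hN0 k
    set e : Fin 1 ⊕ Fin n ≃ Fin (n+1) := finSumFinEquiv.trans (finCongr (Nat.add_comm 1 n)) with he
    have he0 : e (Sum.inl 0) = 0 := rfl
    have heinr : ∀ i : Fin n, e (Sum.inr i) ≠ 0 := by
      intro i h
      have h2 : e (Sum.inr i) = e (Sum.inl 0) := by rw [he0, h]
      simpa using e.injective h2
    set M₁ : Matrix (Fin n) (Fin n) ℂ :=
      Matrix.of (fun i j => N (e (Sum.inr i)) (e (Sum.inr j))) with hM₁def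
    have hM₁symm : M₁ = M₁ᵀ := by
      ext i j
      show N _ _ = N _ _
      conv_lhs => rw [hNsymm, Matrix.transpose_apply]
    obtain ⟨U₁, hU₁, d₁, hd₁, hdiag₁⟩ := ih M₁ hM₁symm
    set B : Matrix (Fin 1 ⊕ Fin n) (Fin 1 ⊕ Fin n) ℂ :=
      Matrix.fromBlocks (Matrix.diagonal fun _ => (σ:ℂ)) 0 0 M₁ with hB
    have hNB : N = B.submatrix e.symm e.symm := by
      ext i j
      rw [Matrix.submatrix_apply]
      obtain ⟨x, rfl⟩ := e.surjective i
      obtain ⟨y, rfl⟩ := e.surjective j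
      rw [Equiv.symm_apply_apply, Equiv.symm_apply_apply]
      match x, y with
      | Sum.inl x0, Sum.inl y0 =>
        have hx0 : x0 = 0 := Subsingleton.elim _ _
        have hy0 : y0 = 0 := Subsingleton.elim _ _
        subst hx0; subst hy0
        rw [he0, hN0 0, if_pos rfl]
        simp [hB]
      | Sum.inl x0, Sum.inr j' =>
        have hx0 : x0 = 0 := Subsingleton.elim _ _
        subst hx0
        rw [he0, hN0' (e (Sum.inr j')), if_neg (heinr j')]
        simp [hB]
      | Sum.inr i', Sum.inl y0 =>
        have hy0 : y0 = 0 := Subsingleton.elim _ _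
        subst hy0
        rw [he0, hN0 (e (Sum.inr i')), if_neg (heinr i')]
        simp [hB]
      | Sum.inr i', Sum.inr j' =>
        simp [hB, hM₁def]
    set Q : Matrix (Fin (n+1)) (Fin (n+1)) ℂ :=
      (Matrix.fromBlocks (1 : Matrix (Fin 1) (Fin 1) ℂ) 0 0 U₁).submatrix e.symm e.symm with hQ
    have hU₁' : star U₁ * U₁ = 1 := Matrix.mem_unitaryGroup_iff'.mp hU₁
    have hQmem : Q ∈ Matrix.unitaryGroup (Fin (n+1)) ℂ := by
      rw [Matrix.mem_unitaryGroup_iff']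
      have h1 : star Q
          = ((Matrix.fromBlocks (1 : Matrix (Fin 1) (Fin 1) ℂ) 0 0 U₁)ᴴ).submatrix e.symm e.symm := by
        rw [hQ, Matrix.star_eq_conjTranspose, Matrix.conjTranspose_submatrix]
      rw [h1, hQ, Matrix.submatrix_mul_equiv, Matrix.fromBlocks_conjTranspose,
        Matrix.fromBlocks_multiply]
      simp only [Matrix.mul_zero, Matrix.zero_mul, add_zero, zero_add,
        Matrix.mul_one, Matrix.one_mul, Matrix.conjTranspose_zero, Matrix.conjTranspose_one]
      rw [show U₁ᴴ * U₁ = 1 from hU₁', Matrix.fromBlocks_one, Matrix.submatrix_one_equiv]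
    refine ⟨V * Q, mul_mem hVmem hQmem,
      fun j => Sum.elim (fun _ => σ) d₁ (e.symm j), fun j => ?_, ?_⟩
    · cases hj : e.symm j with
      | inl x => simp [hj, hσ0]
      | inr x => simp [hj, hd₁ x]
    · have hQT : Qᵀ
          = ((Matrix.fromBlocks (1 : Matrix (Fin 1) (Fin 1) ℂ) 0 0 U₁)ᵀ).submatrix e.symm e.symm := by
        rw [hQ, Matrix.transpose_submatrix]
      calc (V * Q)ᵀ * M * (V * Q)
          = Qᵀ * (Vᵀ * M * V) * Q := by
            rw [Matrix.transpose_mul]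
            simp only [Matrix.mul_assoc]
        _ = ((Matrix.fromBlocks (1 : Matrix (Fin 1) (Fin 1) ℂ) 0 0 U₁)ᵀ * B
              * (Matrix.fromBlocks (1 : Matrix (Fin 1) (Fin 1) ℂ) 0 0 U₁)).submatrix e.symm e.symm := by
            rw [← hN, hQT, hNB, hQ, Matrix.submatrix_mul_equiv, Matrix.submatrix_mul_equiv]
        _ = Matrix.diagonal (fun j => ((Sum.elim (fun _ => σ) d₁ (e.symm j) : ℝ) : ℂ)) := by
            rw [Matrix.fromBlocks_transpose, hB, Matrix.fromBlocks_multiply,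
              Matrix.fromBlocks_multiply]
            simp only [Matrix.mul_zero, Matrix.zero_mul, add_zero, zero_add,
              Matrix.mul_one, Matrix.one_mul, Matrix.transpose_zero, Matrix.transpose_one]
            rw [hdiag₁]
            rw [show (Matrix.diagonal fun _ : Fin 1 => (σ:ℂ)) = Matrix.diagonal
              (fun _ : Fin 1 => ((σ:ℝ):ℂ)) from rfl]
            rw [Matrix.fromBlocks_diagonal, Matrix.submatrix_diagonal _ _ e.symm.injective]
            have hfun : (((fun _ : Fin 1 => (σ:ℂ)) ⊕ᵥ fun i => (d₁ i : ℂ)) ∘ ⇑e.symm)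
                = fun j => ((Sum.elim (fun _ => σ) d₁ (e.symm j) : ℝ) : ℂ) := by
              funext j
              rw [Function.comp_apply]
              cases e.symm j with
              | inl x => rfl
              | inr x => rfl
            rw [hfun]
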